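/- Let j ≥ 1 be a natural number and let 0 ≤ u < u' ≤ v be integers with (j + 1)u' ≤ v. Then the j-fold sumset jY(u, v) is strictly contained in jY(u', v); in particular, the element ju' belongs to jY(u', v) but not to jY(u, v). -/

import Mathlib

open Pointwise

/-- `Y u v = [0, u] ∪ [v − u, v] ⊆ ℤ`. -/
noncomputable def Y (u v : ℤ) : Finset ℤ := Finset.Icc 0 u ∪ Finset.Icc (v - u) v

lemma mem_nsmul_Y_bound (j : ℕ) (hj : 1 ≤ j) (u v : ℤ) (hu : 0 ≤ u) (huv : u ≤ v) :
    ∀ x ∈ j • Y u v, 0 ≤ x ∧ (x ≤ (j : ℤ) * u ∨ v - u ≤ x) := by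
  induction j, hj using Nat.le_induction with
  | base =>
    intro x hx
    simp only [one_nsmul, Y, Finset.mem_union, Finset.mem_Icc] at hx
    rcases hx with ⟨h1, h2⟩ | ⟨h1, h2⟩
    · exact ⟨h1, Or.inl (by push_cast; linarith)⟩
    · exact ⟨by linarith, Or.inr h1⟩
  | succ n hn ih =>
    intro x hx
    rw [succ_nsmul] at hx
    rcases Finset.mem_add.1 hx with ⟨y, hy, a, ha, rfl⟩
    obtain ⟨hy0, hyb⟩ := ih y hy
    simp only [Y, Finset.mem_union, Finset.mem_Icc] at ha
    have ha0 : 0 ≤ a := by rcases ha with ⟨h1, _⟩ | ⟨h1, _⟩ <;> linarith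
    refine ⟨by linarith, ?_⟩
    rcases ha with ⟨_, ha2⟩ | ⟨ha1, _⟩
    · rcases hyb with h | h
      · left; push_cast; linarith
      · right; linarith
    · right; linarith

/-- For `j ≥ 1` and integers `0 ≤ u < u' ≤ v` with `(j+1)u' ≤ v`, the `j`-fold sumset
`jY(u,v)` is strictly contained in `jY(u',v)`; in particular `ju'` lies in `jY(u',v)`
but not in `jY(u,v)`. -/
theorem jfold_sumset_Y_strict_subset (j : ℕ) (hj : 1 ≤ j) (u u' v : ℤ)
    (hu : 0 ≤ u) (huu' : u < u') (hu'v : u' ≤ v) (hju : ((j : ℤ) + 1) * u' ≤ v) :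
    j • Y u v ⊂ j • Y u' v ∧
    (j : ℤ) * u' ∈ j • Y u' v ∧ (j : ℤ) * u' ∉ j • Y u v := by
  have hYsub : Y u v ⊆ Y u' v := by
    intro x hx
    simp only [Y, Finset.mem_union, Finset.mem_Icc] at hx ⊢
    rcases hx with ⟨h1, h2⟩ | ⟨h1, h2⟩
    · left; exact ⟨h1, by linarith⟩
    · right; exact ⟨by linarith, h2⟩
  have hmem : (j : ℤ) * u' ∈ j • Y u' v := by
    have hu'mem : u' ∈ Y u' v := by
      simp only [Y, Finset.mem_union, Finset.mem_Icc]
      left; exact ⟨by linarith, le_refl _⟩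
    have := Finset.nsmul_mem_nsmul hu'mem (n := j)
    rwa [nsmul_eq_mul] at this
  have hnot : (j : ℤ) * u' ∉ j • Y u v := by
    intro hx
    obtain ⟨_, hb⟩ := mem_nsmul_Y_bound j hj u v hu (by linarith) _ hx
    have hj1 : (1 : ℤ) ≤ (j : ℤ) := by exact_mod_cast hj
    rcases hb with h | h
    · nlinarith
    · nlinarith
  exact ⟨⟨Finset.nsmul_subset_nsmul_left hYsub, fun h => hnot (h hmem)⟩, hmem, hnot⟩
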